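/- Let ρ ∈ (-∞, 1) and suppose the price curves g take the form g_j(y) = q_j·y^{1-ρ} for each good j, for some nonnegative constants q_1,…,q_m. If (x, g) is a price curve equilibrium, then x ∈ Ψ_ρ(u), i.e., x maximizes CES welfare with parameter ρ among all valid allocations. -/

import Mathlib

open scoped Classical
open Real

namespace BandwidthAlloc

/-- A bid: `none` denotes the special bid β; `some r` denotes the real bid `r ≥ 0`. -/
abbrev Bid := Option NNReal

/-- Numeric value of a bid (β is treated as 0 in arithmetic). -/
noncomputable def bval (b : Bid) : ℝ := ((b.getD 0 : NNReal) : ℝ)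

/-- A bid is positive when it is neither 0 nor β. -/
def posBid (b : Bid) : Prop := 0 < bval b

/-- Utility of the bundle `xi` for an agent with desired set `Ri`: `min_{j ∈ Ri} xi j`. -/
noncomputable def bundleUtil {m : ℕ} (Ri : Finset (Fin m)) (xi : Fin m → ℝ) : ℝ :=
  sInf (xi '' (Ri : Set (Fin m)))

/-- Bandwidth-allocation utility of agent `i` under allocation `x`. -/
noncomputable def util {n m : ℕ} (R : Fin n → Finset (Fin m))
    (x : Fin n → Fin m → ℝ) (i : Fin n) : ℝ :=
  bundleUtil (R i) (x i)

/-- Weights: `w R i j = 1` iff `j ∈ R i`, else `0`. -/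
noncomputable def w {n m : ℕ} (R : Fin n → Finset (Fin m)) (i : Fin n) (j : Fin m) : ℝ :=
  if j ∈ R i then 1 else 0

/-- A valid (nonnegative, supply-respecting) allocation. -/
def validAlloc {n m : ℕ} (s : Fin m → ℝ) (x : Fin n → Fin m → ℝ) : Prop :=
  (∀ i j, 0 ≤ x i j) ∧ ∀ j, ∑ i, x i j ≤ s j

/-- CES welfare of the utility vector `v` (`ρ = 0` is Nash welfare; for `ρ < 0` a zero
utility yields welfare `0`, the limiting convention). -/
noncomputable def ces (ρ : ℝ) {n : ℕ} (v : Fin n → ℝ) : ℝ :=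
  if ρ = 0 then ∏ i, v i
  else if ρ < 0 ∧ ∃ i, v i = 0 then 0
  else (∑ i, v i ^ ρ) ^ (1 / ρ)

/-- `Ψ_ρ`: `x` is a valid allocation maximizing CES welfare among valid allocations. -/
def maxCES (ρ : ℝ) {n m : ℕ} (s : Fin m → ℝ) (R : Fin n → Finset (Fin m))
    (x : Fin n → Fin m → ℝ) : Prop :=
  validAlloc s x ∧ ∀ y, validAlloc s y → ces ρ (util R y) ≤ ces ρ (util R x)

/-- Constraint curve: continuous, normalized, strictly increasing, nonnegative on `[0,∞)`. -/
def IsConstraintCurve (f : ℝ → ℝ) : Prop :=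
  ContinuousOn f (Set.Ici 0) ∧ f 0 = 0 ∧ StrictMonoOn f (Set.Ici 0) ∧
    ∀ y ∈ Set.Ici (0 : ℝ), 0 ≤ f y

/-- `g` is identically zero on `[0,∞)`. -/
def zeroOn (g : ℝ → ℝ) : Prop := ∀ y ∈ Set.Ici (0 : ℝ), g y = 0

/-- Price curve: continuous, normalized, nonnegative, and either strictly increasing or
identically zero on `[0,∞)`. -/
def IsPriceCurve (g : ℝ → ℝ) : Prop :=
  ContinuousOn g (Set.Ici 0) ∧ g 0 = 0 ∧ (∀ y ∈ Set.Ici (0 : ℝ), 0 ≤ g y) ∧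
    (StrictMonoOn g (Set.Ici 0) ∨ zeroOn g)

/-- Cost of the bundle `xi` under price curves `g`. -/
noncomputable def cost {m : ℕ} (g : Fin m → ℝ → ℝ) (xi : Fin m → ℝ) : ℝ :=
  ∑ j, g j (xi j)

/-- `xi` is in the demand set of an agent with desired set `Ri` under price curves `g`. -/
def inDemand {m : ℕ} (g : Fin m → ℝ → ℝ) (Ri : Finset (Fin m)) (xi : Fin m → ℝ) : Prop :=
  (∀ j, 0 ≤ xi j) ∧ cost g xi ≤ 1 ∧
    ∀ yi : Fin m → ℝ, (∀ j, 0 ≤ yi j) → cost g yi ≤ 1 → bundleUtil Ri yi ≤ bundleUtil Ri xi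

/-- Price curve equilibrium. -/
def isPCE {n m : ℕ} (s : Fin m → ℝ) (R : Fin n → Finset (Fin m))
    (x : Fin n → Fin m → ℝ) (g : Fin m → ℝ → ℝ) : Prop :=
  (∀ i, inDemand g (R i) (x i)) ∧ (∀ j, ∑ i, x i j ≤ s j) ∧
    ∀ j, ¬ zeroOn (g j) → ∑ i, x i j = s j

/-- Step 1 of the ATP allocation rule: proportional sharing. -/
noncomputable def atp1 {n m : ℕ} (s : Fin m → ℝ) (b : Fin n → Fin m → Bid)
    (i : Fin n) (j : Fin m) : ℝ :=
  bval (b i j) / (∑ k, bval (b k j)) * s j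

/-- Steps 1–2 of the ATP allocation rule: goods with a positive bid are shared
proportionally; on a good where everyone bids `0` or `β`, an agent bidding `β` receives
as much as she receives of some fixed good on which she bids positively. -/
noncomputable def atp2 {n m : ℕ} (s : Fin m → ℝ) (b : Fin n → Fin m → Bid)
    (i : Fin n) (j : Fin m) : ℝ :=
  if ∃ k, posBid (b k j) then atp1 s b i j
  else if b i j = none then
    (if h : ∃ ℓ, posBid (b i ℓ) then atp1 s b i (Classical.choose h) else 0)
  else 0

/-- The full ATP allocation rule (steps 1–3): agents bidding `β` on an oversubscribed
step-2 good are penalized with the zero bundle. -/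
noncomputable def atp {n m : ℕ} (s : Fin m → ℝ) (b : Fin n → Fin m → Bid)
    (i : Fin n) (j : Fin m) : ℝ :=
  if ∃ ℓ, (¬ ∃ k, posBid (b k ℓ)) ∧ b i ℓ = none ∧ s ℓ < ∑ k, atp2 s b k ℓ then 0
  else atp2 s b i j

/-- Total bid-constraint cost `C_f(b_i)` of agent `i`'s bid vector. -/
noncomputable def bidCost {m : ℕ} (f : Fin m → ℝ → ℝ) (bi : Fin m → Bid) : ℝ :=
  ∑ j, f j (bval (bi j))

/-- A bid vector is feasible if it obeys the bid constraint `C_f(b_i) ≤ 1`. -/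
def feasibleBid {m : ℕ} (f : Fin m → ℝ → ℝ) (bi : Fin m → Bid) : Prop :=
  bidCost f bi ≤ 1

/-- `b` is a Nash equilibrium of `ATP(f)`: all bids are feasible and no agent can
strictly increase her utility by a unilateral feasible deviation. -/
def isNE {n m : ℕ} (s : Fin m → ℝ) (f : Fin m → ℝ → ℝ)
    (R : Fin n → Finset (Fin m)) (b : Fin n → Fin m → Bid) : Prop :=
  (∀ i, feasibleBid f (b i)) ∧
    ∀ (i : Fin n) (bi' : Fin m → Bid), feasibleBid f bi' →
      util R (atp s (Function.update b i bi')) i ≤ util R (atp s b) i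

/-- `NE_X(ATP(f))`: allocations arising from Nash equilibrium bid profiles. -/
def NEX {n m : ℕ} (s : Fin m → ℝ) (f : Fin m → ℝ → ℝ)
    (R : Fin n → Finset (Fin m)) : Set (Fin n → Fin m → ℝ) :=
  {x | ∃ b, isNE s f R b ∧ x = atp s b}

/-- `f` is homogeneous of degree `α` on the nonnegative reals. -/
def Homog (f : ℝ → ℝ) (α : ℝ) : Prop :=
  ∀ c ≥ (0 : ℝ), ∀ y ≥ (0 : ℝ), f (c * y) = c ^ α * f y

/-- `γ* = max {γ ≥ 0 : γ · Σ_i w_{ij} ≤ s_j for all j}` of Mechanism 1. -/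
noncomputable def gammaStar {n m : ℕ} (s : Fin m → ℝ) (R : Fin n → Finset (Fin m)) : ℝ :=
  sSup {γ : ℝ | 0 ≤ γ ∧ ∀ j, γ * ∑ i, w R i j ≤ s j}

/-- Mechanism 1: `x i j = γ* · w i j`. -/
noncomputable def mech1 {n m : ℕ} (s : Fin m → ℝ) (R : Fin n → Finset (Fin m)) :
    Fin n → Fin m → ℝ :=
  fun i j => gammaStar s R * w R i j

/-- `min_i u_i(x_i)`. -/
noncomputable def minUtil {n m : ℕ} (R : Fin n → Finset (Fin m))
    (x : Fin n → Fin m → ℝ) : ℝ :=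
  sInf (Set.range fun i => util R x i)

/-- `x` is maxmin-optimal: valid and attaining the maximum of `min_i u_i` over valid
allocations. -/
def maxminOptimal {n m : ℕ} (s : Fin m → ℝ) (R : Fin n → Finset (Fin m))
    (x : Fin n → Fin m → ℝ) : Prop :=
  validAlloc s x ∧ ∀ y, validAlloc s y → minUtil R y ≤ minUtil R x

/-- Mechanism 2: `P i k` is the set agent `i` claims agent `k` desires.
`eta P i = |{k : R_k(k) ≠ R_k(i)}|`. -/
noncomputable def eta {n m : ℕ} (P : Fin n → Fin n → Finset (Fin m)) (i : Fin n) : ℕ :=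
  (Finset.univ.filter fun k => P k k ≠ P i k).card

/-- Agent `i` is in `N̄`: for some `k`, `R_k(k) ⊊ R_k(i)`. -/
def inNbar {n m : ℕ} (P : Fin n → Fin n → Finset (Fin m)) (i : Fin n) : Prop :=
  ∃ k, P k k ⊂ P i k

/-- The penalty factor `α_i` of Mechanism 2. -/
noncomputable def alpha {n m : ℕ} (P : Fin n → Fin n → Finset (Fin m)) (i : Fin n) : ℝ :=
  if inNbar P i then 0 else 1 - (eta P i : ℝ) / n

/-- Effective reported sets of Mechanism 2: agents in `N̄` are replaced by `∅`. -/
noncomputable def effSets {n m : ℕ} (P : Fin n → Fin n → Finset (Fin m)) :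
    Fin n → Finset (Fin m) :=
  fun i => if inNbar P i then ∅ else P i i

/-- Mechanism 2: the allocation `x_i = α_i · y_i` where `y` is the Mechanism 1 outcome
on the effective sets. -/
noncomputable def mech2 {n m : ℕ} (s : Fin m → ℝ) (P : Fin n → Fin n → Finset (Fin m)) :
    Fin n → Fin m → ℝ :=
  fun i j => alpha P i * mech1 s (effSets P) i j

/-- Auxiliary lemmas added for the proof. -/
lemma bundleUtil_le {m : ℕ} {Ri : Finset (Fin m)} {xi : Fin m → ℝ} {j : Fin m}
    (hj : j ∈ Ri) : bundleUtil Ri xi ≤ xi j :=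
  csInf_le ((Ri : Set (Fin m)).toFinite.image xi).bddBelow ⟨j, by simpa using hj, rfl⟩

lemma le_bundleUtil {m : ℕ} {Ri : Finset (Fin m)} {xi : Fin m → ℝ} {c : ℝ}
    (hR : Ri.Nonempty) (h : ∀ j ∈ Ri, c ≤ xi j) : c ≤ bundleUtil Ri xi := by
  apply le_csInf
  · exact ⟨xi hR.choose, ⟨hR.choose, by simpa using hR.choose_spec, rfl⟩⟩
  · rintro b ⟨j, hj, rfl⟩
    exact h j (by simpa using hj)

lemma bundleUtil_nonneg {m : ℕ} {Ri : Finset (Fin m)} {xi : Fin m → ℝ}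
    (hR : Ri.Nonempty) (h : ∀ j, 0 ≤ xi j) : 0 ≤ bundleUtil Ri xi :=
  le_bundleUtil hR fun j _ => h j

lemma bundleUtil_indicator {m : ℕ} {Ri : Finset (Fin m)} (hR : Ri.Nonempty) (c : ℝ) :
    bundleUtil Ri (fun j => if j ∈ Ri then c else 0) = c := by
  apply le_antisymm
  · exact (bundleUtil_le hR.choose_spec).trans (by simp [hR.choose_spec])
  · exact le_bundleUtil hR fun j hj => by simp [hj]

lemma tangent_le {ρ a b : ℝ} (h0 : 0 < ρ) (h1 : ρ ≤ 1) (ha : 0 < a) (hb : 0 ≤ b) :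
    b ^ ρ ≤ a ^ ρ + ρ * a ^ (ρ - 1) * (b - a) := by
  have ht : 0 ≤ b / a := div_nonneg hb ha.le
  have key : (b / a) ^ ρ ≤ 1 + ρ * (b / a - 1) := by
    have := rpow_one_add_le_one_add_mul_self (s := b / a - 1) (by linarith) h0.le h1
    simpa using this
  have hap : 0 < a ^ ρ := Real.rpow_pos_of_pos ha ρ
  have hb' : a ^ ρ * (b / a) ^ ρ = b ^ ρ := by
    rw [← Real.mul_rpow ha.le ht, mul_div_cancel₀ _ ha.ne']
  have haρ1 : a ^ (ρ - 1) = a ^ ρ / a := by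
    rw [Real.rpow_sub ha, Real.rpow_one]
  calc b ^ ρ = a ^ ρ * (b / a) ^ ρ := hb'.symm
    _ ≤ a ^ ρ * (1 + ρ * (b / a - 1)) := mul_le_mul_of_nonneg_left key hap.le
    _ = a ^ ρ + ρ * (a ^ ρ / a) * (b - a) := by field_simp
    _ = a ^ ρ + ρ * a ^ (ρ - 1) * (b - a) := by rw [haρ1]

lemma tangent_ge {ρ a b : ℝ} (h0 : ρ < 0) (ha : 0 < a) (hb : 0 < b) :
    a ^ ρ + ρ * a ^ (ρ - 1) * (b - a) ≤ b ^ ρ := by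
  have ht : 0 < b / a := div_pos hb ha
  have key : 1 + ρ * (b / a - 1) ≤ (b / a) ^ ρ := by
    have hlog : Real.log (b / a) ≤ b / a - 1 := Real.log_le_sub_one_of_pos ht
    have h2 : ρ * (b / a - 1) ≤ ρ * Real.log (b / a) := mul_le_mul_of_nonpos_left hlog h0.le
    have h3 : ρ * Real.log (b / a) + 1 ≤ Real.exp (ρ * Real.log (b / a)) :=
      Real.add_one_le_exp _
    have h4 : (b / a) ^ ρ = Real.exp (ρ * Real.log (b / a)) := by
      rw [Real.rpow_def_of_pos ht, mul_comm]
    linarith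
  have hap : 0 < a ^ ρ := Real.rpow_pos_of_pos ha ρ
  have hb' : a ^ ρ * (b / a) ^ ρ = b ^ ρ := by
    rw [← Real.mul_rpow ha.le ht.le, mul_div_cancel₀ _ ha.ne']
  have haρ1 : a ^ (ρ - 1) = a ^ ρ / a := by
    rw [Real.rpow_sub ha, Real.rpow_one]
  calc a ^ ρ + ρ * a ^ (ρ - 1) * (b - a)
      = a ^ ρ * (1 + ρ * (b / a - 1)) := by rw [haρ1]; field_simp
    _ ≤ a ^ ρ * (b / a) ^ ρ := mul_le_mul_of_nonneg_left key hap.le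
    _ = b ^ ρ := hb'

lemma ces_le_of_linear {n : ℕ} {ρ : ℝ} (hρ : ρ < 1) (a b Q : Fin n → ℝ)
    (ha : ∀ i, 0 < a i) (hb : ∀ i, 0 ≤ b i)
    (hQ : ∀ i, Q i * a i ^ (1 - ρ) = 1)
    (hQ' : ∀ i, Q i = a i ^ (ρ - 1))
    (hlin : ∑ i, Q i * b i ≤ ∑ i, Q i * a i) :
    ces ρ b ≤ ces ρ a := by
  rcases Nat.eq_zero_or_pos n with h0 | hn
  · subst h0
    simp only [ces, Finset.univ_eq_empty, Finset.prod_empty, Finset.sum_empty]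
    have : ¬ (ρ < 0 ∧ ∃ i : Fin 0, b i = 0) := by rintro ⟨-, ⟨i, -⟩⟩; exact i.elim0
    have h2 : ¬ (ρ < 0 ∧ ∃ i : Fin 0, a i = 0) := by rintro ⟨-, ⟨i, -⟩⟩; exact i.elim0
    split_ifs <;> simp
  rcases lt_trichotomy ρ 0 with hneg | hzero | hpos
  · -- ρ < 0
    have hcesa : ces ρ a = (∑ i, a i ^ ρ) ^ (1 / ρ) := by
      have : ¬ (ρ < 0 ∧ ∃ i, a i = 0) := by rintro ⟨-, ⟨i, hi⟩⟩; exact (ha i).ne' hi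
      simp [ces, hneg.ne, this]
    by_cases hbz : ∃ i, b i = 0
    · have : ces ρ b = 0 := by simp [ces, hneg.ne, hneg, hbz]
      rw [this, hcesa]
      exact Real.rpow_nonneg (Finset.sum_nonneg fun i _ => Real.rpow_nonneg (ha i).le ρ) _
    · push_neg at hbz
      have hbpos : ∀ i, 0 < b i := fun i => (hb i).lt_of_ne' (hbz i)
      have hcesb : ces ρ b = (∑ i, b i ^ ρ) ^ (1 / ρ) := by
        have : ¬ (ρ < 0 ∧ ∃ i, b i = 0) := by rintro ⟨-, h⟩; exact hbz h.choose h.choose_spec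
        simp [ces, hneg.ne, this]
      rw [hcesa, hcesb]
      have hsum : ∑ i, a i ^ ρ ≤ ∑ i, b i ^ ρ := by
        have h1 : ∑ i, (a i ^ ρ + ρ * (Q i * b i - Q i * a i)) ≤ ∑ i, b i ^ ρ := by
          refine Finset.sum_le_sum fun i _ => ?_
          have e1 := tangent_ge hneg (ha i) (hbpos i)
          have e2 : ρ * (Q i * b i - Q i * a i) = ρ * a i ^ (ρ - 1) * (b i - a i) := by
            rw [hQ' i]; ring
          linarith
        have h2 : ∑ i, (a i ^ ρ + ρ * (Q i * b i - Q i * a i))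
            = ∑ i, a i ^ ρ + ρ * ((∑ i, Q i * b i) - ∑ i, Q i * a i) := by
          rw [Finset.sum_add_distrib, ← Finset.mul_sum, Finset.sum_sub_distrib]
        have h3 : 0 ≤ ρ * ((∑ i, Q i * b i) - ∑ i, Q i * a i) := by nlinarith
        linarith
      have hapos : 0 < ∑ i, a i ^ ρ := by
        refine Finset.sum_pos (fun i _ => Real.rpow_pos_of_pos (ha i) ρ) ?_
        have : Nonempty (Fin n) := Fin.pos_iff_nonempty.mp hn
        exact Finset.univ_nonempty
      exact Real.rpow_le_rpow_of_nonpos hapos hsum (by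
        rw [one_div]; exact inv_nonpos.mpr hneg.le)
  · -- ρ = 0
    subst hzero
    simp only [ces, if_pos rfl]
    have hQa : ∀ i, Q i * a i = 1 := by
      intro i; have := hQ i; rwa [sub_zero, Real.rpow_one] at this
    have hQpos : ∀ i, 0 < Q i := by
      intro i
      have := hQa i
      nlinarith [ha i, this]
    have hsa : (∑ i, Q i * a i) = (n : ℝ) := by
      simp [hQa]
    set z : Fin n → ℝ := fun i => Q i * b i with hz
    have hznn : ∀ i, 0 ≤ z i := fun i => mul_nonneg (hQpos i).le (hb i)
    have hzsum : ∑ i, z i ≤ (n : ℝ) := by rw [← hsa]; exact hlin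
    have hnne : (n : ℝ) ≠ 0 := Nat.cast_ne_zero.mpr hn.ne'
    have hamgm : ∏ i, z i ^ ((n : ℝ)⁻¹) ≤ ∑ i, ((n : ℝ)⁻¹) * z i := by
      refine Real.geom_mean_le_arith_mean_weighted Finset.univ _ _
        (fun i _ => by positivity) ?_ (fun i _ => hznn i)
      simp [Finset.sum_const, hnne]
    have hP1 : ∏ i, z i ^ ((n : ℝ)⁻¹) ≤ 1 := by
      have : ∑ i, ((n : ℝ)⁻¹) * z i = ((n : ℝ)⁻¹) * ∑ i, z i := by rw [Finset.mul_sum]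
      have h4 : ((n : ℝ)⁻¹) * ∑ i, z i ≤ ((n : ℝ)⁻¹) * (n : ℝ) :=
        mul_le_mul_of_nonneg_left hzsum (by positivity)
      rw [inv_mul_cancel₀ hnne] at h4
      calc ∏ i, z i ^ ((n : ℝ)⁻¹) ≤ ∑ i, ((n : ℝ)⁻¹) * z i := hamgm
        _ = ((n : ℝ)⁻¹) * ∑ i, z i := this
        _ ≤ 1 := h4
    have hprodz : ∏ i, z i ≤ 1 := by
      have heq : ∏ i, z i = (∏ i, z i ^ ((n : ℝ)⁻¹)) ^ (n : ℕ) := by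
        rw [← Finset.prod_pow]
        refine Finset.prod_congr rfl fun i _ => ?_
        rw [← Real.rpow_natCast (z i ^ ((n : ℝ)⁻¹)) n, ← Real.rpow_mul (hznn i),
          inv_mul_cancel₀ hnne, Real.rpow_one]
      rw [heq]
      exact pow_le_one₀ (Finset.prod_nonneg fun i _ => Real.rpow_nonneg (hznn i) _) hP1
    have hfinal : ∏ i, b i = (∏ i, z i) * ∏ i, a i := by
      rw [← Finset.prod_mul_distrib]
      refine Finset.prod_congr rfl fun i _ => ?_
      calc b i = b i * (Q i * a i) := by rw [hQa i, mul_one]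
        _ = z i * a i := by simp only [hz]; ring
    rw [hfinal]
    calc (∏ i, z i) * ∏ i, a i ≤ 1 * ∏ i, a i :=
        mul_le_mul_of_nonneg_right hprodz (Finset.prod_nonneg fun i _ => (ha i).le)
      _ = ∏ i, a i := one_mul _
  · -- 0 < ρ < 1
    have hcond : ∀ v : Fin n → ℝ, ces ρ v = (∑ i, v i ^ ρ) ^ (1 / ρ) := by
      intro v
      have : ¬ (ρ < 0 ∧ ∃ i, v i = 0) := by rintro ⟨h, -⟩; exact absurd h (not_lt.mpr hpos.le)
      simp [ces, hpos.ne', this]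
    rw [hcond a, hcond b]
    have hsum : ∑ i, b i ^ ρ ≤ ∑ i, a i ^ ρ := by
      have h1 : ∑ i, b i ^ ρ ≤ ∑ i, (a i ^ ρ + ρ * (Q i * b i - Q i * a i)) := by
        refine Finset.sum_le_sum fun i _ => ?_
        have e1 := tangent_le hpos hρ.le (ha i) (hb i)
        have e2 : ρ * (Q i * b i - Q i * a i) = ρ * a i ^ (ρ - 1) * (b i - a i) := by
          rw [hQ' i]; ring
        linarith
      have h2 : ∑ i, (a i ^ ρ + ρ * (Q i * b i - Q i * a i))
          = ∑ i, a i ^ ρ + ρ * ((∑ i, Q i * b i) - ∑ i, Q i * a i) := by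
        rw [Finset.sum_add_distrib, ← Finset.mul_sum, Finset.sum_sub_distrib]
      have h3 : ρ * ((∑ i, Q i * b i) - ∑ i, Q i * a i) ≤ 0 :=
        mul_nonpos_of_nonneg_of_nonpos hpos.le (by linarith)
      linarith
    exact Real.rpow_le_rpow (Finset.sum_nonneg fun i _ => Real.rpow_nonneg (hb i) ρ) hsum
      (by positivity)

/-- for `ρ < 1`, if `(x, g)` is a price curve equilibrium with
`g_j(y) = q_j · y^(1-ρ)` for nonnegative constants `q_j`, then `x` maximizes CES welfare
with parameter `ρ` among valid allocations. -/
theorem ces_sufficient {n m : ℕ} (s : Fin m → ℝ) (hs : ∀ j, 0 < s j)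
    (R : Fin n → Finset (Fin m)) (hR : ∀ i, (R i).Nonempty)
    (ρ : ℝ) (hρ : ρ < 1)
    (q : Fin m → ℝ) (hq : ∀ j, 0 ≤ q j)
    (x : Fin n → Fin m → ℝ)
    (hx : isPCE s R x (fun j y => q j * y ^ (1 - ρ))) :
    maxCES ρ s R x := by
  obtain ⟨hdem, hsup, hclear⟩ := hx
  set e := 1 - ρ with he_def
  have he : 0 < e := by rw [he_def]; linarith
  have hxnn : ∀ i j, 0 ≤ x i j := fun i j => (hdem i).1 j
  set u : Fin n → ℝ := util R x with hu_def
  set Q : Fin n → ℝ := fun i => ∑ j ∈ R i, q j with hQ_def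
  have hQnn : ∀ i, 0 ≤ Q i := fun i => Finset.sum_nonneg fun j _ => hq j
  have hunn : ∀ i, 0 ≤ u i := fun i => bundleUtil_nonneg (hR i) (hxnn i)
  have hindc : ∀ (i : Fin n) (c : ℝ), 0 ≤ c →
      cost (fun j y => q j * y ^ e) (fun j => if j ∈ R i then c else 0) = Q i * c ^ e := by
    intro i c _
    simp only [cost, hQ_def]
    calc ∑ j, q j * (if j ∈ R i then c else 0) ^ e
        = ∑ j, (if j ∈ R i then q j * c ^ e else 0) := by
          refine Finset.sum_congr rfl fun j _ => ?_
          split_ifs with h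
          · rfl
          · rw [Real.zero_rpow he.ne', mul_zero]
      _ = ∑ j ∈ R i, q j * c ^ e := by rw [Finset.sum_ite_mem, Finset.univ_inter]
      _ = (∑ j ∈ R i, q j) * c ^ e := by rw [Finset.sum_mul]
  have hagent : ∀ i, 0 < u i ∧ Q i * u i ^ e = 1 ∧ (∑ j, q j * x i j = Q i * u i) := by
    intro i
    obtain ⟨hx0, hxc, hopt⟩ := hdem i
    have hxc' : ∑ j, q j * (x i j) ^ e ≤ 1 := by simpa [cost] using hxc
    -- Q i is positive
    have hQpos : 0 < Q i := by
      rcases (hQnn i).eq_or_lt with h | h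
      · exfalso
        have hq0 : ∀ j ∈ R i, q j = 0 :=
          (Finset.sum_eq_zero_iff_of_nonneg (fun j _ => hq j)).mp h.symm
        have hynn : ∀ j, 0 ≤ (if j ∈ R i then u i + 1 else 0 : ℝ) := by
          intro j; split_ifs
          · linarith [hunn i]
          · exact le_refl 0
        have hyc : cost (fun j y => q j * y ^ e) (fun j => if j ∈ R i then u i + 1 else 0) ≤ 1 := by
          rw [hindc i _ (by linarith [hunn i]), ← h, zero_mul]
          norm_num
        have hle := hopt _ hynn hyc
        rw [bundleUtil_indicator (hR i)] at hle
        have : bundleUtil (R i) (x i) = u i := rfl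
        rw [this] at hle
        linarith
      · exact h
    -- the benchmark bundle
    have hcpos : 0 < (1 / Q i) ^ (1 / e) := Real.rpow_pos_of_pos (by positivity) _
    set c : ℝ := (1 / Q i) ^ (1 / e) with hc_def
    have hce : c ^ e = 1 / Q i := by
      rw [hc_def, ← Real.rpow_mul (by positivity), one_div_mul_cancel he.ne', Real.rpow_one]
    have hQc : Q i * c ^ e = 1 := by
      rw [hce]; field_simp
    have hcost_c : cost (fun j y => q j * y ^ e) (fun j => if j ∈ R i then c else 0) = 1 := by
      rw [hindc i c hcpos.le, hQc]
    have hcu : c ≤ u i := by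
      have hynn : ∀ j, 0 ≤ (if j ∈ R i then c else 0 : ℝ) := by
        intro j; split_ifs
        · exact hcpos.le
        · exact le_refl 0
      have hle := hopt _ hynn (le_of_eq hcost_c)
      rw [bundleUtil_indicator (hR i)] at hle
      exact hle
    have hupos : 0 < u i := lt_of_lt_of_le hcpos hcu
    have hsub : ∑ j ∈ R i, q j * (x i j) ^ e ≤ 1 := by
      refine le_trans ?_ hxc'
      exact Finset.sum_le_sum_of_subset_of_nonneg (Finset.subset_univ _)
        (fun j _ _ => mul_nonneg (hq j) (Real.rpow_nonneg (hx0 j) e))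
    have hlow : Q i * u i ^ e ≤ ∑ j ∈ R i, q j * (x i j) ^ e := by
      have : Q i * u i ^ e = ∑ j ∈ R i, q j * u i ^ e := by
        rw [hQ_def]; exact Finset.sum_mul _ _ _
      rw [this]
      refine Finset.sum_le_sum fun j hj => ?_
      exact mul_le_mul_of_nonneg_left
        (Real.rpow_le_rpow (hunn i) (bundleUtil_le hj) he.le) (hq j)
    have h1ge : 1 ≤ Q i * u i ^ e := by
      rw [← hQc]
      exact mul_le_mul_of_nonneg_left (Real.rpow_le_rpow hcpos.le hcu he.le) (hQnn i)
    have hQu : Q i * u i ^ e = 1 := le_antisymm (hlow.trans hsub) h1ge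
    refine ⟨hupos, hQu, ?_⟩
    have hAeq : ∑ j ∈ R i, q j * (x i j) ^ e = 1 := le_antisymm hsub (by rw [← hQu]; exact hlow)
    have hsplit := Finset.sum_add_sum_compl (R i) (fun j => q j * (x i j) ^ e)
    have houtnn : ∀ j ∈ (R i)ᶜ, 0 ≤ q j * (x i j) ^ e :=
      fun j _ => mul_nonneg (hq j) (Real.rpow_nonneg (hx0 j) e)
    have hout0 : ∑ j ∈ (R i)ᶜ, q j * (x i j) ^ e = 0 := by
      have h1 : ∑ j ∈ (R i)ᶜ, q j * (x i j) ^ e ≤ 0 := by linarith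
      exact le_antisymm h1 (Finset.sum_nonneg houtnn)
    have hout : ∀ j, j ∉ R i → q j * (x i j) ^ e = 0 := by
      intro j hj
      exact (Finset.sum_eq_zero_iff_of_nonneg houtnn).mp hout0 j (Finset.mem_compl.mpr hj)
    have hin : ∀ j ∈ R i, q j * (x i j) ^ e = q j * u i ^ e := by
      have hQe : ∑ j ∈ R i, q j * u i ^ e = 1 := by
        rw [← Finset.sum_mul]
        exact hQu
      have hdnn : ∀ j ∈ R i, 0 ≤ q j * (x i j) ^ e - q j * u i ^ e := fun j hj =>
        sub_nonneg.mpr (mul_le_mul_of_nonneg_left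
          (Real.rpow_le_rpow (hunn i) (bundleUtil_le hj) he.le) (hq j))
      have hdiff : ∑ j ∈ R i, (q j * (x i j) ^ e - q j * u i ^ e) = 0 := by
        rw [Finset.sum_sub_distrib, hAeq, hQe, sub_self]
      intro j hj
      have := (Finset.sum_eq_zero_iff_of_nonneg hdnn).mp hdiff j hj
      linarith
    have hterm : ∀ j, q j * x i j = (if j ∈ R i then q j * u i else 0) := by
      intro j
      by_cases hj : j ∈ R i
      · rw [if_pos hj]
        rcases (hq j).eq_or_lt with h | h
        · rw [← h, zero_mul, zero_mul]
        · have hxe : (x i j) ^ e = u i ^ e := mul_left_cancel₀ h.ne' (hin j hj)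
          have hxu : x i j = u i := by
            apply le_antisymm
            · exact (Real.rpow_le_rpow_iff (hx0 j) (hunn i) he).mp (le_of_eq hxe)
            · exact (Real.rpow_le_rpow_iff (hunn i) (hx0 j) he).mp (le_of_eq hxe.symm)
          rw [hxu]
      · rw [if_neg hj]
        rcases mul_eq_zero.mp (hout j hj) with h | h
        · rw [h, zero_mul]
        · have : x i j = 0 := by
              rwa [Real.rpow_eq_zero (hx0 j) he.ne'] at h
          rw [this, mul_zero]
    calc ∑ j, q j * x i j = ∑ j, (if j ∈ R i then q j * u i else 0) :=
          Finset.sum_congr rfl fun j _ => hterm j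
      _ = ∑ j ∈ R i, q j * u i := by rw [Finset.sum_ite_mem, Finset.univ_inter]
      _ = Q i * u i := by rw [hQ_def]; exact (Finset.sum_mul _ _ _).symm
  -- market clearing in weighted form
  have hclear' : ∀ j, q j * s j = q j * ∑ i, x i j := by
    intro j
    rcases (hq j).eq_or_lt with h | h
    · rw [← h, zero_mul, zero_mul]
    · have hnz : ¬ zeroOn ((fun j y => q j * y ^ e) j) := by
        intro hz
        have := hz 1 (by norm_num)
        simp only [Real.one_rpow, mul_one] at this
        exact h.ne' this
      rw [hclear j hnz]
  have keyX : ∑ j, q j * s j = ∑ i, Q i * u i := by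
    calc ∑ j, q j * s j = ∑ j, q j * ∑ i, x i j := Finset.sum_congr rfl fun j _ => hclear' j
      _ = ∑ j, ∑ i, q j * x i j := by simp_rw [Finset.mul_sum]
      _ = ∑ i, ∑ j, q j * x i j := Finset.sum_comm
      _ = ∑ i, Q i * u i := Finset.sum_congr rfl fun i _ => (hagent i).2.2
  have keyY : ∀ y, validAlloc s y → ∑ i, Q i * util R y i ≤ ∑ i, Q i * u i := by
    rintro y ⟨hynn, hys⟩
    rw [← keyX]
    calc ∑ i, Q i * util R y i ≤ ∑ i, ∑ j, q j * y i j := by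
          refine Finset.sum_le_sum fun i _ => ?_
          calc Q i * util R y i = ∑ j ∈ R i, q j * util R y i := by
                rw [hQ_def]; exact Finset.sum_mul _ _ _
            _ ≤ ∑ j ∈ R i, q j * y i j :=
                Finset.sum_le_sum fun j hj =>
                  mul_le_mul_of_nonneg_left (bundleUtil_le hj) (hq j)
            _ ≤ ∑ j, q j * y i j :=
                Finset.sum_le_sum_of_subset_of_nonneg (Finset.subset_univ _)
                  (fun j _ _ => mul_nonneg (hq j) (hynn i j))
      _ = ∑ j, ∑ i, q j * y i j := Finset.sum_comm
      _ = ∑ j, q j * ∑ i, y i j := by simp_rw [Finset.mul_sum]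
      _ ≤ ∑ j, q j * s j := Finset.sum_le_sum fun j _ =>
          mul_le_mul_of_nonneg_left (hys j) (hq j)
  refine ⟨⟨hxnn, hsup⟩, ?_⟩
  intro y hy
  have hQ' : ∀ i, Q i = u i ^ (ρ - 1) := by
    intro i
    have h1 := (hagent i).2.1
    have hup := (hagent i).1
    have h2 : Q i = (u i ^ e)⁻¹ := eq_inv_of_mul_eq_one_left h1
    rw [h2, ← Real.rpow_neg hup.le]
    congr 1
    rw [he_def]; ring
  have hQe : ∀ i, Q i * u i ^ (1 - ρ) = 1 := fun i => (hagent i).2.1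
  exact ces_le_of_linear hρ u (util R y) Q (fun i => (hagent i).1)
    (fun i => bundleUtil_nonneg (hR i) (fun j => hy.1 i j)) hQe hQ' (keyY y hy)


end BandwidthAlloc
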